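/- Let k ≥ 1 and let a, b ∈ {0,1}^k with a ≠ b. For every d ≥ 0 there exists an integer N ≥ k such that ‖F_N(a) − F_N(b)‖₂ ≥ d. -/

import Mathlib

/-- `occCount a x` : number of starting positions at which the rule `a` (a binary
string of length `k`) occurs as a contiguous substring of the binary string `x`
of length `N`.  This is the value `F_N(a)(x)` of the transform. -/
def occCount {k N : ℕ} (a : Fin k → Bool) (x : Fin N → Bool) : ℕ :=
  ((List.range (N - k + 1)).filter
    (fun i => (List.ofFn a).isPrefixOf ((List.ofFn x).drop i))).length

/-- real-valued indicator of a boolean -/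
def boolInd (b : Bool) : ℝ := if b then 1 else 0

lemma ofFn_cons {N : ℕ} (c : Bool) (x : Fin N → Bool) :
    List.ofFn (Fin.cons c x : Fin (N + 1) → Bool) = c :: List.ofFn x := by
  rw [List.ofFn_succ]; simp

lemma count_prefix (j M : ℕ) (h : j ≤ M) (p : Fin j → Bool) :
    ∑ x : Fin M → Bool, boolInd ((List.ofFn p).isPrefixOf (List.ofFn x)) = 2 ^ (M - j) := by
  obtain ⟨r, rfl⟩ : ∃ r, M = j + r := ⟨M - j, by omega⟩
  rw [show j + r - j = r from by omega]
  set e : ((Fin j → Bool) × (Fin r → Bool)) ≃ (Fin (j + r) → Bool) :=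
    (Equiv.sumArrowEquivProdArrow _ _ _).symm.trans
      (Equiv.arrowCongr finSumFinEquiv (Equiv.refl Bool)) with he
  rw [← Equiv.sum_comp e (fun x => boolInd ((List.ofFn p).isPrefixOf (List.ofFn x)))]
  rw [Fintype.sum_prod_type]
  have key : ∀ u : Fin j → Bool, ∀ v : Fin r → Bool,
      boolInd ((List.ofFn p).isPrefixOf (List.ofFn (e (u, v)))) = if u = p then (1:ℝ) else 0 := by
    intro u v
    have hofn : List.ofFn (e (u, v)) = List.ofFn u ++ List.ofFn v := by
      rw [List.ofFn_add]
      congr 1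
      · exact congrArg List.ofFn (funext fun i => by
          have hc : Fin.castLE (Nat.le_add_right j r) i = Fin.castAdd r i := rfl
          simp [he, hc])
      · exact congrArg List.ofFn (funext fun i => by simp [he])
    rw [hofn]
    have htake : List.take j (List.ofFn u ++ List.ofFn v) = List.ofFn u := by
      have := List.take_left (l₁ := List.ofFn u) (l₂ := List.ofFn v)
      rwa [List.length_ofFn] at this
    by_cases hu : u = p
    · subst hu
      simp [boolInd, List.isPrefixOf_iff_prefix, List.prefix_append]
    · have hnp : ¬ (List.ofFn p <+: List.ofFn u ++ List.ofFn v) := by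
        intro hpre
        rw [List.prefix_iff_eq_take, List.length_ofFn, htake] at hpre
        exact hu (List.ofFn_inj.mp hpre.symm)
      simp [boolInd, List.isPrefixOf_iff_prefix, hnp, hu]
  simp only [key]
  simp [Finset.sum_ite_eq, Finset.card_univ]

lemma occ_cons {k N : ℕ} (hk : k ≤ N) (a : Fin k → Bool) (c : Bool) (x : Fin N → Bool) :
    occCount a (Fin.cons c x : Fin (N + 1) → Bool)
      = (if (List.ofFn a).isPrefixOf (c :: List.ofFn x) then 1 else 0) + occCount a x := by
  unfold occCount
  rw [ofFn_cons, show N + 1 - k + 1 = (N - k + 1) + 1 from by omega, List.range_succ_eq_map,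
    List.filter_cons]
  have hmap : List.filter (fun i => (List.ofFn a).isPrefixOf (List.drop i (c :: List.ofFn x)))
        (List.map Nat.succ (List.range (N - k + 1)))
      = List.map Nat.succ (List.filter
          (fun i => (List.ofFn a).isPrefixOf (List.drop i (List.ofFn x)))
          (List.range (N - k + 1))) := by
    rw [List.filter_map]
    congr 1
  cases hp : ((List.ofFn a).isPrefixOf (c :: List.ofFn x)) with
  | false => simp [hp, hmap]
  | true => simp [hp, hmap]; omega

/-- the indicator-difference used in the extension recurrence -/
def ee {k N : ℕ} (a : Fin k → Bool) (c : Bool) (x : Fin N → Bool) : ℝ :=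
  boolInd ((List.ofFn a).isPrefixOf (c :: List.ofFn x))

lemma cross_prefix {k : ℕ} (a b : Fin k → Bool) (hab : a ≠ b) (l : List Bool) :
    ¬((List.ofFn a).isPrefixOf l = true ∧ (List.ofFn b).isPrefixOf l = true) := by
  rintro ⟨h1, h2⟩
  rw [List.isPrefixOf_iff_prefix, List.prefix_iff_eq_take, List.length_ofFn] at h1 h2
  exact hab (List.ofFn_inj.mp (h1.trans h2.symm))

lemma not_both_heads {k' : ℕ} (a : Fin (k' + 1) → Bool) (l : List Bool) :
    ¬((List.ofFn a).isPrefixOf (false :: l) = true ∧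
      (List.ofFn a).isPrefixOf (true :: l) = true) := by
  rw [List.isPrefixOf_iff_prefix, List.isPrefixOf_iff_prefix, List.ofFn_succ,
    List.cons_prefix_cons, List.cons_prefix_cons]
  rintro ⟨⟨h1, -⟩, ⟨h2, -⟩⟩
  rw [h1] at h2
  exact Bool.noConfusion h2

lemma boolInd_sq (b : Bool) : boolInd b ^ 2 = boolInd b := by
  cases b <;> simp [boolInd]

lemma boolInd_nonneg (b : Bool) : 0 ≤ boolInd b := by
  cases b <;> simp [boolInd]

lemma boolInd_mul_eq_zero {b1 b2 : Bool} (h : ¬(b1 = true ∧ b2 = true)) :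
    boolInd b1 * boolInd b2 = 0 := by
  cases b1 <;> cases b2 <;> simp [boolInd] at h ⊢

lemma sq_ee {k N : ℕ} (a b : Fin k → Bool) (hab : a ≠ b) (c : Bool) (x : Fin N → Bool) :
    (ee a c x - ee b c x) ^ 2 = ee a c x + ee b c x := by
  have h := boolInd_mul_eq_zero (cross_prefix a b hab (c :: List.ofFn x))
  unfold ee
  nlinarith [boolInd_sq ((List.ofFn a).isPrefixOf (c :: List.ofFn x)),
    boolInd_sq ((List.ofFn b).isPrefixOf (c :: List.ofFn x)), h]

lemma s_sq_le {k' N : ℕ} (a b : Fin (k' + 1) → Bool) (hab : a ≠ b) (x : Fin N → Bool) :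
    ((ee a false x - ee b false x) + (ee a true x - ee b true x)) ^ 2
      ≤ (ee a false x - ee b false x) ^ 2 + (ee a true x - ee b true x) ^ 2 := by
  have ha := boolInd_mul_eq_zero (not_both_heads a (List.ofFn x))
  have hb := boolInd_mul_eq_zero (not_both_heads b (List.ofFn x))
  have hF := boolInd_mul_eq_zero (cross_prefix a b hab (false :: List.ofFn x))
  have hT := boolInd_mul_eq_zero (cross_prefix a b hab (true :: List.ofFn x))
  unfold ee
  nlinarith [ha, hb, hF, hT,
    mul_nonneg (boolInd_nonneg ((List.ofFn a).isPrefixOf (false :: List.ofFn x)))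
      (boolInd_nonneg ((List.ofFn b).isPrefixOf (true :: List.ofFn x))),
    mul_nonneg (boolInd_nonneg ((List.ofFn a).isPrefixOf (true :: List.ofFn x)))
      (boolInd_nonneg ((List.ofFn b).isPrefixOf (false :: List.ofFn x)))]

lemma growth (k N : ℕ) (hk : 1 ≤ k) (hN : k ≤ N) (a b : Fin k → Bool) (hab : a ≠ b) :
    (2:ℝ) ^ (N + 1 - k) ≤ ∑ y : Fin (N + 1) → Bool, ((occCount a y : ℝ) - occCount b y) ^ 2 := by
  obtain ⟨k', rfl⟩ : ∃ k', k = k' + 1 := ⟨k - 1, by omega⟩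
  have ecns : ∀ c : Bool, ∀ x : Fin N → Bool,
      (Fin.consEquiv fun _ : Fin (N + 1) => Bool) (c, x) = Fin.cons c x := fun _ _ => rfl
  -- Step 1: rewrite the sum over length-(N+1) strings as a sum over length-N strings
  have hsum : (∑ y : Fin (N + 1) → Bool, ((occCount a y : ℝ) - occCount b y) ^ 2)
      = ∑ x : Fin N → Bool,
          ((((occCount a x : ℝ) - occCount b x) + (ee a false x - ee b false x)) ^ 2
            + (((occCount a x : ℝ) - occCount b x) + (ee a true x - ee b true x)) ^ 2) := by
    rw [← Equiv.sum_comp (Fin.consEquiv fun _ : Fin (N + 1) => Bool)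
      (fun y => ((occCount a y : ℝ) - occCount b y) ^ 2), Fintype.sum_prod_type_right]
    refine Finset.sum_congr rfl fun x _ => ?_
    rw [Fintype.sum_bool]
    simp only [ecns]
    rw [occ_cons hN a false x, occ_cons hN a true x, occ_cons hN b false x, occ_cons hN b true x]
    push_cast
    unfold ee boolInd
    ring
  -- counting sums
  have hcount : ∀ p : Fin (k' + 1) → Bool,
      (∑ x : Fin N → Bool, ee p false x) + (∑ x : Fin N → Bool, ee p true x)
        = 2 ^ (N - k') := by
    intro p
    have h := count_prefix (k' + 1) (N + 1) (by omega) p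
    rw [show N + 1 - (k' + 1) = N - k' from by omega] at h
    rw [← h, ← Equiv.sum_comp (Fin.consEquiv fun _ : Fin (N + 1) => Bool)
      (fun y => boolInd ((List.ofFn p).isPrefixOf (List.ofFn y))), Fintype.sum_prod_type_right]
    have key : ∀ x : Fin N → Bool, ∀ c : Bool,
        boolInd ((List.ofFn p).isPrefixOf
          (List.ofFn ((Fin.consEquiv fun _ : Fin (N + 1) => Bool) (c, x)))) = ee p c x := by
      intro x c
      rw [ecns, ofFn_cons]
      rfl
    simp only [Fintype.sum_bool, key]
    rw [Finset.sum_add_distrib]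
    ring
  -- the four sums
  have hQ : (∑ x : Fin N → Bool, ((ee a false x - ee b false x) ^ 2
        + (ee a true x - ee b true x) ^ 2)) = 2 * 2 ^ (N - k') := by
    have : ∀ x : Fin N → Bool, (ee a false x - ee b false x) ^ 2
        + (ee a true x - ee b true x) ^ 2
        = (ee a false x + ee a true x) + (ee b false x + ee b true x) := by
      intro x
      rw [sq_ee a b hab false x, sq_ee a b hab true x]
      ring
    rw [Finset.sum_congr rfl fun x _ => this x]
    rw [Finset.sum_add_distrib, Finset.sum_add_distrib, Finset.sum_add_distrib]
    rw [hcount a, hcount b]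
    ring
  have hTQ : (∑ x : Fin N → Bool, ((ee a false x - ee b false x)
        + (ee a true x - ee b true x)) ^ 2)
      ≤ ∑ x : Fin N → Bool, ((ee a false x - ee b false x) ^ 2
        + (ee a true x - ee b true x) ^ 2) :=
    Finset.sum_le_sum fun x _ => s_sq_le a b hab x
  have hCS := Finset.sum_mul_sq_le_sq_mul_sq Finset.univ
    (fun x : Fin N → Bool => (occCount a x : ℝ) - occCount b x)
    (fun x : Fin N → Bool => (ee a false x - ee b false x) + (ee a true x - ee b true x))
  have hD0 : (0:ℝ) ≤ ∑ x : Fin N → Bool, ((occCount a x : ℝ) - occCount b x) ^ 2 :=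
    Finset.sum_nonneg fun x _ => sq_nonneg _
  have hexp : (∑ x : Fin N → Bool,
          ((((occCount a x : ℝ) - occCount b x) + (ee a false x - ee b false x)) ^ 2
            + (((occCount a x : ℝ) - occCount b x) + (ee a true x - ee b true x)) ^ 2))
      = 2 * (∑ x : Fin N → Bool, ((occCount a x : ℝ) - occCount b x) ^ 2)
        + 2 * (∑ x : Fin N → Bool, ((occCount a x : ℝ) - occCount b x)
            * ((ee a false x - ee b false x) + (ee a true x - ee b true x)))
        + ∑ x : Fin N → Bool, ((ee a false x - ee b false x) ^ 2
            + (ee a true x - ee b true x) ^ 2) := by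
    rw [Finset.mul_sum, Finset.mul_sum, ← Finset.sum_add_distrib, ← Finset.sum_add_distrib]
    exact Finset.sum_congr rfl fun x _ => by ring
  rw [hsum, hexp, hQ]
  rw [show N + 1 - (k' + 1) = N - k' from by omega]
  set D := ∑ x : Fin N → Bool, ((occCount a x : ℝ) - occCount b x) ^ 2 with hD
  set P := ∑ x : Fin N → Bool, ((occCount a x : ℝ) - occCount b x)
      * ((ee a false x - ee b false x) + (ee a true x - ee b true x)) with hP
  set T := ∑ x : Fin N → Bool, ((ee a false x - ee b false x)
      + (ee a true x - ee b true x)) ^ 2 with hT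
  have hq0 : (0:ℝ) < 2 ^ (N - k') := by positivity
  have hP2 : P ^ 2 ≤ D * (2 * 2 ^ (N - k')) := by
    calc P ^ 2 ≤ D * T := hCS
    _ ≤ D * (2 * 2 ^ (N - k')) := by
        apply mul_le_mul_of_nonneg_left _ hD0
        rw [← hQ]
        exact hTQ
  nlinarith [hP2, hD0, hq0, sq_nonneg (2 * D - 2 ^ (N - k')),
    sq_nonneg (2 * D + 2 ^ (N - k') + 2 * P)]

theorem stmt17 (k : ℕ) (hk : 1 ≤ k) (a b : Fin k → Bool) (hab : a ≠ b)
    (d : ℝ) (hd : 0 ≤ d) :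
    ∃ N : ℕ, k ≤ N ∧
      d ≤ Real.sqrt (∑ x : Fin N → Bool, ((occCount a x : ℝ) - (occCount b x : ℝ)) ^ 2) := by
  obtain ⟨m, hm⟩ := pow_unbounded_of_one_lt d (one_lt_two (α := ℝ))
  refine ⟨k + 2 * m + 1, by omega, ?_⟩
  have hgrow := growth k (k + 2 * m) hk (by omega) a b hab
  have hS0 : (0:ℝ) ≤ ∑ x : Fin (k + 2 * m + 1) → Bool,
      ((occCount a x : ℝ) - (occCount b x : ℝ)) ^ 2 :=
    Finset.sum_nonneg fun x _ => sq_nonneg _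
  rw [Real.le_sqrt hd hS0]
  have hexp : k + 2 * m + 1 - k = 2 * m + 1 := by omega
  rw [hexp] at hgrow
  have h1 : d ^ 2 ≤ (2:ℝ) ^ (2 * m + 1) := by
    have h2 : d ^ 2 ≤ ((2:ℝ) ^ m) ^ 2 := by
      apply pow_le_pow_left₀ hd hm.le
    calc d ^ 2 ≤ ((2:ℝ) ^ m) ^ 2 := h2
      _ = (2:ℝ) ^ (2 * m) := by rw [← pow_mul, mul_comm]
      _ ≤ (2:ℝ) ^ (2 * m + 1) := by
          apply pow_le_pow_right₀ one_le_two
          omega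
  exact h1.trans hgrow
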